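/- Let K(r, V) = inf over random variables Π with E[Π] ≥ r, Var(Π) ≤ V of E[Φ(Π)], and suppose a minimizer P_Π exists with Var(Π) > 0 for Π ~ P_Π. Define, for β ≥ 0 and σ := √(V(Γ)) > 0, L₂(r, β) = inf over feasible P_Π of [ E[Φ(Π)] − ∫_{β/σ}^∞ φ(x)·( E[Φ(√2·Π − x)] − E[Φ(Π/√2 + r/(√2·σ) − x)] ) dx ]. If ‖√2·Π‖_∞ > ‖Π/√2 + r/(√2σ)‖_∞ for the minimizer Π (which holds whenever Var(Π) > 0 and E[Π] = r/σ), then for sufficiently large β, L₂(r, β) < K(r/σ, C) where C is the variance bound, i.e., the integral term is strictly positive for large β. -/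

import Mathlib

open MeasureTheory ProbabilityTheory
open Real Set Filter

/-- Standard Gaussian density. -/
noncomputable def gaussPDF (x : ℝ) : ℝ := Real.exp (-(x ^ 2) / 2) / Real.sqrt (2 * Real.pi)

/-- Standard Gaussian CDF. -/
noncomputable def gaussCDF (x : ℝ) : ℝ := ∫ t in Set.Iic x, gaussPDF t

/-- The feasible set `F_{K}`: laws of random variables with mean exactly `m`, variance at
most `Vb`, and support on at most 3 points. -/
def Feas3 (m Vb : ℝ) : Set (Measure ℝ) :=
  {μ | IsProbabilityMeasure μ ∧ (∫ x, x ∂μ) = m ∧ variance id μ ≤ Vb ∧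
    ∃ s : Finset ℝ, s.card ≤ 3 ∧ μ (↑s : Set ℝ)ᶜ = 0}

/-- `K` as an infimum over the feasible set. -/
noncomputable def Kc (m Vb : ℝ) : ℝ :=
  sInf {e : ℝ | ∃ μ ∈ Feas3 m Vb, e = ∫ x, gaussCDF x ∂μ}

/-- The function `L₂(r, β)` of the feedback analysis. -/
noncomputable def L2 (r σ Vb β : ℝ) : ℝ :=
  sInf {e : ℝ | ∃ μ ∈ Feas3 (r / σ) Vb, e =
    (∫ x, gaussCDF x ∂μ) -
      ∫ x in Set.Ioi (β / σ), gaussPDF x *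
        ((∫ y, gaussCDF (Real.sqrt 2 * y - x) ∂μ) -
          ∫ y, gaussCDF (y / Real.sqrt 2 + r / (Real.sqrt 2 * σ) - x) ∂μ)}

lemma gaussPDF_pos (x : ℝ) : 0 < gaussPDF x :=
  div_pos (Real.exp_pos _) (Real.sqrt_pos.mpr (by positivity))

lemma integrable_gaussPDF : Integrable gaussPDF := by
  have h := (integrable_exp_neg_mul_sq (by norm_num : (0:ℝ) < 1/2)).div_const (Real.sqrt (2 * Real.pi))
  refine h.congr (Filter.Eventually.of_forall fun x => ?_)
  simp only [gaussPDF]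
  ring_nf

lemma integral_gaussPDF : ∫ x, gaussPDF x = 1 := by
  have h := integral_gaussian (1/2)
  have h2 : (Real.pi / (1/2)) = 2 * Real.pi := by ring
  rw [h2] at h
  have : ∫ x, gaussPDF x = (∫ x : ℝ, Real.exp (-(1/2) * x ^ 2)) / Real.sqrt (2 * Real.pi) := by
    rw [← integral_div]
    exact integral_congr_ae (Filter.Eventually.of_forall fun x => by
      simp only [gaussPDF]; ring_nf)
  rw [this, h, div_self]
  positivity

lemma gaussCDF_nonneg (x : ℝ) : 0 ≤ gaussCDF x :=
  setIntegral_nonneg measurableSet_Iic fun t _ => (gaussPDF_pos t).le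

lemma gaussCDF_le_one (x : ℝ) : gaussCDF x ≤ 1 := by
  rw [← integral_gaussPDF]
  exact setIntegral_le_integral integrable_gaussPDF
    (Filter.Eventually.of_forall fun t => (gaussPDF_pos t).le)

lemma gaussCDF_mono : Monotone gaussCDF := fun x y hxy =>
  setIntegral_mono_set integrable_gaussPDF.integrableOn
    (Filter.Eventually.of_forall fun t => (gaussPDF_pos t).le)
    (HasSubset.Subset.eventuallyLE (Set.Iic_subset_Iic.mpr hxy))

lemma measurable_gaussCDF : Measurable gaussCDF := gaussCDF_mono.measurable

lemma integrableOn_exp_mul_Iic' (z c : ℝ) (hz : 0 < z) :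
    IntegrableOn (fun t => Real.exp (z * t)) (Iic c) := by
  rw [← (Measure.measurePreserving_neg (volume : Measure ℝ)).integrableOn_comp_preimage
      (Homeomorph.neg ℝ).measurableEmbedding]
  simp only [Function.comp_def, neg_preimage, neg_Iic]
  rw [integrableOn_Ici_iff_integrableOn_Ioi]
  have := exp_neg_integrableOn_Ioi (-c) hz
  exact this.congr_fun (fun x _ => by ring_nf) measurableSet_Ioi

lemma integral_exp_mul_Iic' (z c : ℝ) (hz : 0 < z) :
    ∫ t in Iic c, Real.exp (z * t) = Real.exp (z * c) / z := by
  have hderiv : ∀ x ∈ Iic c, HasDerivAt (fun t => Real.exp (z * t) / z) (Real.exp (z * x)) x := by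
    intro x _
    have h1 : HasDerivAt (fun t : ℝ => z * t) z x := by
      simpa using (hasDerivAt_id x).const_mul z
    have h2 := (h1.exp).div_const z
    simpa [mul_div_assoc, mul_comm, mul_div_cancel_left₀ _ hz.ne'] using h2
  have htend : Tendsto (fun t => Real.exp (z * t) / z) atBot (nhds 0) := by
    have : Tendsto (fun t : ℝ => z * t) atBot atBot := tendsto_const_mul_atBot_of_pos hz |>.mpr tendsto_id
    simpa using (Real.tendsto_exp_atBot.comp this).div_const z
  have := integral_Iic_of_hasDerivAt_of_tendsto' hderiv (integrableOn_exp_mul_Iic' z c hz) htend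
  simpa using this

lemma gaussCDF_le_mills {z : ℝ} (hz : 0 < z) : gaussCDF (-z) ≤ gaussPDF z / z := by
  have key : ∀ t ∈ Iic (-z), gaussPDF t ≤ gaussPDF z * Real.exp (z * z) * Real.exp (z * t) := by
    intro t ht
    have hrw : gaussPDF z * Real.exp (z * z) * Real.exp (z * t) =
        Real.exp (-(z ^ 2) / 2 + (z * z + z * t)) / Real.sqrt (2 * Real.pi) := by
      simp only [gaussPDF, Real.exp_add]; ring
    rw [hrw]
    show Real.exp (-(t ^ 2) / 2) / Real.sqrt (2 * Real.pi) ≤ _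
    gcongr
    nlinarith [sq_nonneg (t + z)]
  have h1 : gaussCDF (-z) ≤ ∫ t in Iic (-z), gaussPDF z * Real.exp (z * z) * Real.exp (z * t) := by
    apply setIntegral_mono_on integrable_gaussPDF.integrableOn
      ((integrableOn_exp_mul_Iic' z (-z) hz).const_mul _) measurableSet_Iic key
  have h2 : ∫ t in Iic (-z), gaussPDF z * Real.exp (z * z) * Real.exp (z * t)
      = gaussPDF z * Real.exp (z * z) * (Real.exp (z * -z) / z) := by
    rw [MeasureTheory.integral_const_mul, integral_exp_mul_Iic' z (-z) hz]
  have h3 : Real.exp (z * -z) = (Real.exp (z * z))⁻¹ := by rw [mul_neg, Real.exp_neg]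
  rw [h2, h3] at h1
  have hepos := Real.exp_pos (z * z)
  calc gaussCDF (-z) ≤ _ := h1
    _ = gaussPDF z / z := by field_simp

lemma gaussCDF_lower {c ε : ℝ} (hc : c ≤ 0) (hε : 0 < ε) :
    ε * gaussPDF (c - ε) ≤ gaussCDF c := by
  have h1 : ∫ t in Icc (c - ε) c, gaussPDF (c - ε) ≤ ∫ t in Icc (c - ε) c, gaussPDF t := by
    apply setIntegral_mono_on (by simp) (integrable_gaussPDF.integrableOn) measurableSet_Icc
    intro t ht
    have ht2 : t ^ 2 ≤ (c - ε) ^ 2 := by nlinarith [ht.1, ht.2]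
    simp only [gaussPDF]
    gcongr

  have h2 : ∫ t in Icc (c - ε) c, gaussPDF t ≤ gaussCDF c := by
    apply setIntegral_mono_set integrable_gaussPDF.integrableOn
      (Filter.Eventually.of_forall fun t => (gaussPDF_pos t).le)
      (HasSubset.Subset.eventuallyLE (fun t ht => ht.2))
  have h3 : ∫ t in Icc (c - ε) c, gaussPDF (c - ε) = ε * gaussPDF (c - ε) := by
    rw [setIntegral_const]
    simp [Real.volume_Icc, ENNReal.toReal_ofReal hε.le, smul_eq_mul, hε.le]
  linarith

lemma integral_mem_Icc01 {μ : Measure ℝ} [IsProbabilityMeasure μ] {f : ℝ → ℝ}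
    (h : ∀ y, f y ∈ Icc (0:ℝ) 1) : (∫ y, f y ∂μ) ∈ Icc (0:ℝ) 1 := by
  by_cases hf : Integrable f μ
  · constructor
    · exact integral_nonneg fun y => (h y).1
    · have := integral_mono hf (integrable_const (1:ℝ)) fun y => (h y).2
      simpa using this
  · rw [integral_undef hf]; norm_num

lemma integral_eq_sum {μ : Measure ℝ} {s : Finset ℝ} (h0 : μ (↑s : Set ℝ)ᶜ = 0)
    {f : ℝ → ℝ} (hf : Integrable f μ) :
    ∫ y, f y ∂μ = ∑ y ∈ s, (μ {y}).toReal * f y := by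
  have hms : MeasurableSet (↑s : Set ℝ) := s.measurableSet
  rw [← integral_add_compl hms hf]
  have hz : μ.restrict (↑s : Set ℝ)ᶜ = 0 := Measure.restrict_eq_zero.mpr h0
  rw [hz, integral_zero_measure, add_zero, integral_finset s hf.integrableOn]
  simp [smul_eq_mul, measureReal_def]

lemma bounded_integrable {μ : Measure ℝ} [IsProbabilityMeasure μ] {f : ℝ → ℝ}
    (hm : AEStronglyMeasurable f μ) (C : ℝ) (h : ∀ y, |f y| ≤ C) : Integrable f μ :=
  (integrable_const C).mono' hm (Filter.Eventually.of_forall fun y => by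
    simpa [Real.norm_eq_abs] using h y)

-- helper: the two μ-integrands are integrable and bounded
lemma AB_mem01 {μ : Measure ℝ} [IsProbabilityMeasure μ] (f : ℝ → ℝ)
    (hf : ∀ y, f y ∈ Icc (0:ℝ) 1) : (∫ y, f y ∂μ) ∈ Icc (0:ℝ) 1 := integral_mem_Icc01 hf

lemma bddbelow_L2set (r σ Vb β : ℝ) :
    ∀ e ∈ {e : ℝ | ∃ μ ∈ Feas3 (r / σ) Vb, e =
    (∫ x, gaussCDF x ∂μ) -
      ∫ x in Set.Ioi (β / σ), gaussPDF x *
        ((∫ y, gaussCDF (Real.sqrt 2 * y - x) ∂μ) -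
          ∫ y, gaussCDF (y / Real.sqrt 2 + r / (Real.sqrt 2 * σ) - x) ∂μ)}, (-1:ℝ) ≤ e := by
  rintro e ⟨μ, hμ, rfl⟩
  haveI : IsProbabilityMeasure μ := hμ.1
  have h1 : (0:ℝ) ≤ ∫ x, gaussCDF x ∂μ := integral_nonneg fun x => gaussCDF_nonneg x
  set g : ℝ → ℝ := fun x => gaussPDF x *
        ((∫ y, gaussCDF (Real.sqrt 2 * y - x) ∂μ) -
          ∫ y, gaussCDF (y / Real.sqrt 2 + r / (Real.sqrt 2 * σ) - x) ∂μ) with hg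
  have h2 : (∫ x in Set.Ioi (β / σ), g x) ≤ 1 := by
    have hb : ∀ x, ‖g x‖ ≤ gaussPDF x := by
      intro x
      simp only [hg]
      set I1 := ∫ y, gaussCDF (Real.sqrt 2 * y - x) ∂μ with hI1
      set I2 := ∫ y, gaussCDF (y / Real.sqrt 2 + r / (Real.sqrt 2 * σ) - x) ∂μ with hI2
      have hA : I1 ∈ Icc (0:ℝ) 1 := hI1 ▸ integral_mem_Icc01
        (fun y => ⟨gaussCDF_nonneg _, gaussCDF_le_one _⟩)
      have hB : I2 ∈ Icc (0:ℝ) 1 := hI2 ▸ integral_mem_Icc01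
        (fun y => ⟨gaussCDF_nonneg _, gaussCDF_le_one _⟩)
      have habs : |I1 - I2| ≤ 1 := abs_le.mpr
        ⟨by linarith [hA.1, hB.2], by linarith [hA.2, hB.1]⟩
      rw [Real.norm_eq_abs, abs_mul, abs_of_pos (gaussPDF_pos x)]
      calc gaussPDF x * |I1 - I2| ≤ gaussPDF x * 1 :=
            mul_le_mul_of_nonneg_left habs (gaussPDF_pos x).le
        _ = gaussPDF x := mul_one _
    calc (∫ x in Set.Ioi (β / σ), g x) ≤ ‖∫ x in Set.Ioi (β / σ), g x‖ := le_norm_self _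
      _ ≤ ∫ x in Set.Ioi (β / σ), ‖g x‖ := norm_integral_le_integral_norm g
      _ ≤ ∫ x in Set.Ioi (β / σ), gaussPDF x := by
          apply integral_mono_of_nonneg (Filter.Eventually.of_forall fun x => norm_nonneg _)
            integrable_gaussPDF.integrableOn (Filter.Eventually.of_forall hb)
      _ ≤ ∫ x, gaussPDF x := setIntegral_le_integral integrable_gaussPDF
            (Filter.Eventually.of_forall fun t => (gaussPDF_pos t).le)
      _ = 1 := integral_gaussPDF
  linarith


set_option maxHeartbeats 1600000 in
/-- If the infimum defining `K(r/σ, Vb)` is attained by a distribution with strictly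
positive variance, then for all sufficiently large `β`, `L₂(r, β) < K(r/σ, Vb)`. -/
theorem stmt16 (r σ Vb : ℝ) (hσ : 0 < σ) (hVb : 0 < Vb)
    (hmin : ∃ μ ∈ Feas3 (r / σ) Vb,
      (∫ x, gaussCDF x ∂μ) = Kc (r / σ) Vb ∧ 0 < variance id μ) :
    ∃ β₀ : ℝ, ∀ β ≥ β₀, L2 r σ Vb β < Kc (r / σ) Vb := by
  obtain ⟨μ, hfeas, hKeq, hvar⟩ := hmin
  obtain ⟨hprob, hmean, hvarle, s, hcard, hs0⟩ := hfeas
  have hfeas' : μ ∈ Feas3 (r / σ) Vb := ⟨hprob, hmean, hvarle, s, hcard, hs0⟩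
  haveI := hprob
  set m : ℝ := r / σ with hm
  -- the essential support
  set s' : Finset ℝ := s.filter (fun y => μ {y} ≠ 0) with hs'
  have hs'0 : μ (↑s' : Set ℝ)ᶜ = 0 := by
    have hsub : (↑s' : Set ℝ)ᶜ ⊆ (↑s : Set ℝ)ᶜ ∪ (↑(s \ s') : Set ℝ) := by
      intro y hy
      by_cases h : y ∈ s
      · right
        simp only [Finset.coe_sdiff, Set.mem_diff, Finset.mem_coe]
        exact ⟨h, hy⟩
      · left; simpa using h
    have hsd : μ (↑(s \ s') : Set ℝ) = 0 := by
      have h1 : μ (↑(s \ s') : Set ℝ) ≤ ∑ y ∈ (s \ s'), μ {y} := by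
        rw [← Set.biUnion_of_singleton (↑(s \ s') : Set ℝ)]
        simpa using measure_biUnion_finset_le (μ := μ) (s \ s') (fun y => {y})
      have h2 : ∀ y ∈ s \ s', μ {y} = 0 := by
        intro y hy
        rw [Finset.mem_sdiff, hs', Finset.mem_filter] at hy
        by_contra h
        exact hy.2 ⟨hy.1, h⟩
      rw [Finset.sum_congr rfl h2] at h1
      simpa using h1
    refine le_antisymm ?_ (by simp)
    refine le_trans (measure_mono hsub) ?_
    refine le_trans (measure_union_le _ _) ?_
    rw [hs0, hsd, zero_add]
  have hae : ∀ᵐ y ∂μ, y ∈ (↑s' : Set ℝ) := by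
    rw [ae_iff]
    have : {a : ℝ | ¬ a ∈ (↑s' : Set ℝ)} = (↑s' : Set ℝ)ᶜ := rfl
    rw [this, hs'0]
  have hs'ne : s'.Nonempty := by
    by_contra h
    rw [Finset.not_nonempty_iff_eq_empty] at h
    rw [h, Finset.coe_empty, Set.compl_empty, measure_univ] at hs'0
    exact one_ne_zero hs'0
  set M : ℝ := s'.max' hs'ne with hM
  have hMs' : M ∈ s' := s'.max'_mem hs'ne
  have hpM : (0:ℝ) < (μ {M}).toReal := by
    have hne : μ {M} ≠ 0 := (Finset.mem_filter.mp hMs').2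
    exact ENNReal.toReal_pos hne (measure_lt_top μ _).ne
  have haeM : ∀ᵐ y ∂μ, y ≤ M := hae.mono fun y hy => s'.le_max' y (by exact_mod_cast hy)
  -- integrability of the identity
  set C : ℝ := s'.sup' hs'ne (fun y => |y|) with hC
  have hid_int : Integrable (fun y : ℝ => y) μ := by
    refine (integrable_const C).mono' aestronglyMeasurable_id ?_
    filter_upwards [hae] with y hy
    simpa [Real.norm_eq_abs] using Finset.le_sup' (fun y => |y|) (by exact_mod_cast hy)
  -- mean strictly below max
  have hmM : m < M := by
    by_contra h
    push_neg at h
    have hy_le : ∀ᵐ y ∂μ, y ≤ m := haeM.mono fun y hy => le_trans hy h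
    have hintm : ∫ y, (m - y) ∂μ = 0 := by
      rw [integral_sub (integrable_const m) hid_int, hmean]
      simp
    have hzero : (fun y => m - y) =ᵐ[μ] 0 := by
      refine (integral_eq_zero_iff_of_nonneg_ae ?_ ((integrable_const m).sub hid_int)).mp hintm
      filter_upwards [hy_le] with y hy
      simpa using hy
    have hconst : (id : ℝ → ℝ) =ᵐ[μ] (fun _ => m) := by
      filter_upwards [hzero] with y hy
      simp only [Pi.zero_apply] at hy
      simp only [id]
      linarith
    have hev0 : evariance id μ = 0 := by
      rw [evariance_eq_zero_iff aemeasurable_id]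
      have hμid : μ[id] = m := by simpa [id] using hmean
      rw [hμid]
      exact hconst
    rw [variance, hev0] at hvar
    simp at hvar
  -- the two critical abscissae
  have hsqrt2 : (0:ℝ) < Real.sqrt 2 := by positivity
  have h2 : Real.sqrt 2 * Real.sqrt 2 = 2 := Real.mul_self_sqrt (by norm_num)
  set a : ℝ := Real.sqrt 2 * M with ha
  set b : ℝ := M / Real.sqrt 2 + m / Real.sqrt 2 with hb
  have hba : b < a := by
    rw [hb, ha, ← add_div, div_lt_iff₀ hsqrt2]
    have h4 : Real.sqrt 2 * M * Real.sqrt 2 = M * 2 := by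
      rw [mul_comm (Real.sqrt 2) M, mul_assoc, h2]
    rw [h4]
    linarith
  have hrm : r / (Real.sqrt 2 * σ) = m / Real.sqrt 2 := by
    rw [hm, div_div, mul_comm]
  set p : ℝ := (μ {M}).toReal with hp
  set ε : ℝ := (a - b) / 2 with hε
  have hεpos : 0 < ε := div_pos (sub_pos.mpr hba) two_pos
  set c : ℝ := a - ε with hc
  have hcb : c - b = ε := by rw [hc, hε]; ring
  -- pdf identity
  have gaussPDF_neg : ∀ u : ℝ, gaussPDF (-u) = gaussPDF u := fun u => by
    simp only [gaussPDF, neg_sq]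
  have hident : ∀ x : ℝ, gaussPDF (x - c) =
      gaussPDF (x - b) * Real.exp (ε * x - ε * (b + c) / 2) := by
    intro x
    have hexp : -((x - c) ^ 2) / 2 = -((x - b) ^ 2) / 2 + (ε * x - ε * (b + c) / 2) := by
      have hεeq : ε = c - b := hcb.symm
      rw [hεeq]; ring
    simp only [gaussPDF]
    rw [hexp, Real.exp_add]
    ring
  -- the two expectation functions
  set A : ℝ → ℝ := fun x => ∫ y, gaussCDF (Real.sqrt 2 * y - x) ∂μ with hA
  set B : ℝ → ℝ := fun x => ∫ y, gaussCDF (y / Real.sqrt 2 + r / (Real.sqrt 2 * σ) - x) ∂μ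
    with hBdef
  have hgc01 : ∀ u : ℝ, |gaussCDF u| ≤ 1 := fun u =>
    abs_le.mpr ⟨le_trans (by norm_num) (gaussCDF_nonneg u), gaussCDF_le_one u⟩
  have hAint : ∀ x, Integrable (fun y => gaussCDF (Real.sqrt 2 * y - x)) μ := by
    intro x
    refine bounded_integrable ?_ 1 (fun y => hgc01 _)
    exact (measurable_gaussCDF.comp ((measurable_id.const_mul _).sub
      measurable_const)).aestronglyMeasurable
  have hBint : ∀ x, Integrable (fun y => gaussCDF (y / Real.sqrt 2 + r / (Real.sqrt 2 * σ) - x))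
      μ := by
    intro x
    refine bounded_integrable ?_ 1 (fun y => hgc01 _)
    exact (measurable_gaussCDF.comp (((measurable_id.div_const _).add_const _).sub
      measurable_const)).aestronglyMeasurable
  have hA01 : ∀ x, A x ∈ Icc (0:ℝ) 1 := fun x =>
    integral_mem_Icc01 (fun y => ⟨gaussCDF_nonneg _, gaussCDF_le_one _⟩)
  have hB01 : ∀ x, B x ∈ Icc (0:ℝ) 1 := fun x =>
    integral_mem_Icc01 (fun y => ⟨gaussCDF_nonneg _, gaussCDF_le_one _⟩)
  have hAsum : ∀ x, A x = ∑ y ∈ s', (μ {y}).toReal * gaussCDF (Real.sqrt 2 * y - x) :=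
    fun x => integral_eq_sum hs'0 (hAint x)
  -- lower bound for A
  have hAlb : ∀ x, p * gaussCDF (a - x) ≤ A x := by
    intro x
    rw [hAsum x, hp, ha]
    exact Finset.single_le_sum (f := fun y => (μ {y}).toReal * gaussCDF (Real.sqrt 2 * y - x))
      (fun y _ => mul_nonneg ENNReal.toReal_nonneg (gaussCDF_nonneg _)) hMs'
  -- upper bound for B
  have hBub : ∀ x, B x ≤ gaussCDF (b - x) := by
    intro x
    have h1 : ∫ y, gaussCDF (y / Real.sqrt 2 + r / (Real.sqrt 2 * σ) - x) ∂μ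
        ≤ ∫ _, gaussCDF (b - x) ∂μ := by
      refine integral_mono_ae (hBint x) (integrable_const _) ?_
      filter_upwards [haeM] with y hy
      refine gaussCDF_mono ?_
      rw [hrm, hb]
      gcongr
    simpa using h1
  have hBsum : ∀ x, B x = ∑ y ∈ s', (μ {y}).toReal *
      gaussCDF (y / Real.sqrt 2 + r / (Real.sqrt 2 * σ) - x) :=
    fun x => integral_eq_sum hs'0 (hBint x)
  -- eventual strict domination
  have htend : Tendsto (fun x => (x - b) * (p * ε * Real.exp (ε * x - ε * (b + c) / 2)))
      atTop atTop := by
    apply Filter.Tendsto.atTop_mul_atTop₀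
    · simpa [sub_eq_add_neg] using tendsto_atTop_add_const_right atTop (-b) tendsto_id
    · apply Filter.Tendsto.const_mul_atTop (mul_pos hpM hεpos)
      apply Real.tendsto_exp_atTop.comp
      simpa [sub_eq_add_neg] using tendsto_atTop_add_const_right atTop (-(ε * (b + c) / 2))
        (Filter.Tendsto.const_mul_atTop hεpos tendsto_id)
  have hev : ∀ᶠ x in atTop, B x < A x := by
    filter_upwards [htend.eventually_gt_atTop 1, eventually_ge_atTop (max a (b + 1))]
      with x hGx hx
    have hxa : a ≤ x := le_trans (le_max_left _ _) hx
    have hxb : b + 1 ≤ x := le_trans (le_max_right _ _) hx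
    have hxb' : 0 < x - b := by linarith
    have h1 : B x ≤ gaussPDF (x - b) / (x - b) := by
      refine le_trans (hBub x) ?_
      have hmills := gaussCDF_le_mills hxb'
      simpa [neg_sub] using hmills
    have h2 : p * (ε * gaussPDF (x - c)) ≤ A x := by
      refine le_trans ?_ (hAlb x)
      have hax : a - x ≤ 0 := by linarith
      have h3 := gaussCDF_lower hax hεpos
      have h4 : a - x - ε = -(x - c) := by rw [hc]; ring
      rw [h4, gaussPDF_neg] at h3
      exact mul_le_mul_of_nonneg_left h3 hpM.le
    have h5 : gaussPDF (x - b) / (x - b) < p * (ε * gaussPDF (x - c)) := by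
      rw [hident x, div_lt_iff₀ hxb']
      have h6 := mul_lt_mul_of_pos_left hGx (gaussPDF_pos (x - b))
      nlinarith [h6]
    linarith
  obtain ⟨x₀, hx₀⟩ := eventually_atTop.mp hev
  refine ⟨σ * x₀, fun β hβ => ?_⟩
  have hβσ : x₀ ≤ β / σ := by
    rw [le_div_iff₀ hσ, mul_comm]
    exact hβ
  -- measurability and integrability of the tail integrand
  have hAm : Measurable A := by
    rw [funext hAsum]
    apply Finset.measurable_sum
    intro y _
    exact (measurable_gaussCDF.comp (measurable_id.const_sub _)).const_mul _
  have hBm : Measurable B := by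
    rw [funext hBsum]
    apply Finset.measurable_sum
    intro y _
    exact (measurable_gaussCDF.comp (measurable_id.const_sub _)).const_mul _
  have hpdfm : Measurable gaussPDF := by
    apply Measurable.div _ measurable_const
    exact Real.measurable_exp.comp ((measurable_id.pow_const 2).neg.div_const 2)
  have hgmeas : Measurable (fun x => gaussPDF x * (A x - B x)) :=
    hpdfm.mul (hAm.sub hBm)
  have hgint : IntegrableOn (fun x => gaussPDF x * (A x - B x)) (Ioi (β / σ)) := by
    refine Integrable.mono' integrable_gaussPDF.integrableOn hgmeas.aestronglyMeasurable ?_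
    filter_upwards with x
    rw [Real.norm_eq_abs, abs_mul, abs_of_pos (gaussPDF_pos x)]
    have habs : |A x - B x| ≤ 1 := by
      rw [abs_le]
      constructor
      · linarith [(hA01 x).1, (hB01 x).2]
      · linarith [(hA01 x).2, (hB01 x).1]
    calc gaussPDF x * |A x - B x| ≤ gaussPDF x * 1 :=
          mul_le_mul_of_nonneg_left habs (gaussPDF_pos x).le
      _ = gaussPDF x := mul_one _
  have hgpos : ∀ x ∈ Ioi (β / σ), 0 < gaussPDF x * (A x - B x) := by
    intro x hx
    have hxx : x₀ ≤ x := le_trans hβσ (le_of_lt hx)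
    exact mul_pos (gaussPDF_pos x) (sub_pos.mpr (hx₀ x hxx))
  have hIioc : (0:ℝ) < ∫ x in Ioc (β / σ) (β / σ + 1), gaussPDF x * (A x - B x) := by
    have hfi : IntervalIntegrable (fun x => gaussPDF x * (A x - B x)) volume
        (β / σ) (β / σ + 1) := by
      rw [intervalIntegrable_iff_integrableOn_Ioc_of_le (by linarith)]
      exact hgint.mono_set Ioc_subset_Ioi_self
    have hpos := intervalIntegral.intervalIntegral_pos_of_pos_on hfi
      (fun x hx => hgpos x (mem_Ioi.mpr hx.1)) (by linarith)
    rwa [intervalIntegral.integral_of_le (by linarith)] at hpos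
  have hI : (0:ℝ) < ∫ x in Ioi (β / σ), gaussPDF x * (A x - B x) := by
    refine lt_of_lt_of_le hIioc ?_
    refine setIntegral_mono_set hgint ?_
      (HasSubset.Subset.eventuallyLE Ioc_subset_Ioi_self)
    rw [EventuallyLE]
    refine (ae_restrict_iff' measurableSet_Ioi).mpr (Filter.Eventually.of_forall ?_)
    exact fun x hx => (hgpos x hx).le
  -- conclude via the infimum
  have hmem : (∫ x, gaussCDF x ∂μ) -
      (∫ x in Ioi (β / σ), gaussPDF x * (A x - B x)) ∈
      {e : ℝ | ∃ μ ∈ Feas3 (r / σ) Vb, e =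
        (∫ x, gaussCDF x ∂μ) -
          ∫ x in Set.Ioi (β / σ), gaussPDF x *
            ((∫ y, gaussCDF (Real.sqrt 2 * y - x) ∂μ) -
              ∫ y, gaussCDF (y / Real.sqrt 2 + r / (Real.sqrt 2 * σ) - x) ∂μ)} :=
    ⟨μ, hfeas', rfl⟩
  have hle : L2 r σ Vb β ≤ (∫ x, gaussCDF x ∂μ) -
      (∫ x in Ioi (β / σ), gaussPDF x * (A x - B x)) :=
    csInf_le ⟨-1, fun e he => bddbelow_L2set r σ Vb β e he⟩ hmem
  rw [hKeq] at hle
  linarith
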